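/- The Frobenius additive FFT multiplication count F(m, l), defined by the recurrence F(0, l) = 0, F(k, 0) = F(k-1, 0) + F(k-1, 1) + 2^{k-1} M(1), F(k, l) = F(k-1, l+1) + 2^{k-1} M(l) if l is a power of two, and F(k, l) = 2 F(k-1, l+1) + 2^{k-1} M(r(l)) otherwise (where r(l) is the smallest power of two ≥ l), satisfies F(m, 0) ≤ (1/2) m 2^m · M(d)/d and F(m, l) ≤ (1/2) m 2^m · (M(d)/d) · r(l) for l > 0, whenever m + l ≤ d, d is a power of two, and M: ℕ → ℝ≥0 is a function with M(l)/l nondecreasing and M(l) defined for powers-of-two arguments with M(l) ≤ (M(d)/d)·l. -/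

import Mathlib

open Polynomial Finset

noncomputable section

/-- The finite field with `2^d` elements. -/
abbrev GF (d : ℕ) := GaloisField 2 d

/-- `n` is a power of two. -/
def IsPow2 (n : ℕ) : Prop := ∃ m : ℕ, n = 2 ^ m

/-- A Cantor sequence `u₀, u₁, …`: `u₀² + u₀ = 1` and
`uᵢ² + uᵢ = u₀u₁⋯uᵢ₋₁ +` a sum of lower monomials. -/
def IsCantorSeq {F : Type} [Field F] (u : ℕ → F) : Prop :=
  u 0 ^ 2 + u 0 = 1 ∧
  ∀ i, 0 < i → ∃ S : Finset (Finset ℕ),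
    (∀ T ∈ S, T ⊂ Finset.range i) ∧
    u i ^ 2 + u i = (∏ j ∈ Finset.range i, u j) + ∑ T ∈ S, ∏ j ∈ T, u j

/-- Cantor basis vectors: `vᵢ = ∏_{j : bit j of i is 1} uⱼ`. -/
def cv {F : Type} [Field F] (u : ℕ → F) (i : ℕ) : F :=
  ∏ j ∈ (Finset.range i).filter (fun j => i.testBit j), u j

/-- `W_k`: the `𝔽₂`-span of `v₀, …, v_{k-1}`. -/
def Wspan (d : ℕ) (v : ℕ → GF d) (k : ℕ) : Submodule (ZMod 2) (GF d) :=
  Submodule.span (ZMod 2) (v '' Set.Iio k)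

/-- The subspace polynomial `s_k` as a function: `s_k(x) = ∏_{a ∈ W_k} (x - a)`. -/
def sFun (d : ℕ) (v : ℕ → GF d) (k : ℕ) (x : GF d) : GF d :=
  ∏ a ∈ (Set.toFinite ((Wspan d v k : Set (GF d)))).toFinset, (x - a)

/-- The subspace polynomial `s_k` as a polynomial. -/
def sPoly (d : ℕ) (v : ℕ → GF d) (k : ℕ) : Polynomial (GF d) :=
  ∏ a ∈ (Set.toFinite ((Wspan d v k : Set (GF d)))).toFinset, (X - C a)

/-- The cross-section pieces `Σᵢ` (coordinates at power-of-two positions vanish). -/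
def SigmaSet (d : ℕ) (u : ℕ → GF d) (i : ℕ) : Set (GF d) :=
  if i = 0 then {0} else
    { x | ∃ c : ℕ → ZMod 2, (∀ k, IsPow2 k → c k = 0) ∧
        x = cv u (i - 1) + ∑ k ∈ Finset.Icc 1 (i - 1), c k • cv u (i - 1 - k) }

/-- The novel polynomial basis `X_k = ∏_{i : bit i of k} s_i`. -/
def Xpoly (d : ℕ) (v : ℕ → GF d) (k : ℕ) : Polynomial (GF d) :=
  ∏ i ∈ (Finset.range d).filter (fun i => k.testBit i), sPoly d v i

/-- `rpow2 l` is the smallest power of two `≥ l` (with `rpow2 0 = 1`). -/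
def rpow2 (l : ℕ) : ℕ := 2 ^ Nat.clog 2 l

/-- The multiplication count of the Frobenius additive FFT. -/
def Frec (M : ℕ → ℝ) : ℕ → ℕ → ℝ
  | 0, _ => 0
  | k + 1, 0 => Frec M k 0 + Frec M k 1 + 2 ^ k * M 1
  | k + 1, l + 1 =>
    if l + 1 = 2 ^ Nat.log 2 (l + 1) then Frec M k (l + 2) + 2 ^ k * M (l + 1)
    else 2 * Frec M k (l + 2) + 2 ^ k * M (rpow2 (l + 1))

/-- The multiplication count `F(m, l)` of the Frobenius additive FFT satisfies
`F(m, 0) ≤ ½ m 2^m · M(d)/d` and `F(m, l) ≤ ½ m 2^m · (M(d)/d) · r(l)` for `l > 0`,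
whenever `m + l ≤ d`, `d` is a power of two, `M(l)/l` is nondecreasing, and
`M(l) ≤ (M(d)/d)·l`. -/
theorem FAFFT_mul_complexity (d e : ℕ) (hd : d = 2 ^ e) (M : ℕ → ℝ)
    (hM0 : ∀ l, 0 ≤ M l)
    (hMmono : ∀ a b : ℕ, 0 < a → a ≤ b → M a / a ≤ M b / b)
    (hMd : ∀ l : ℕ, M l ≤ M d / d * l)
    (m l : ℕ) (hml : m + l ≤ d) :
    (l = 0 → Frec M m 0 ≤ (1 / 2) * m * 2 ^ m * (M d / d)) ∧
    (0 < l → Frec M m l ≤ (1 / 2) * m * 2 ^ m * (M d / d) * rpow2 l) := by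
  set C := M d / d with hC
  have hC0 : 0 ≤ C := div_nonneg (hM0 d) (by positivity)
  have key : ∀ m l, Frec M m l ≤ (1/2) * m * 2^m * C * rpow2 l := by
    intro m
    induction m with
    | zero => intro l; simp [Frec]
    | succ k ih =>
      intro l
      have h2k : (0:ℝ) ≤ 2^k := by positivity
      match l with
      | 0 =>
        have h1 := ih 0
        have h2 := ih 1
        have hr0 : rpow2 0 = 1 := by simp [rpow2]
        have hr1 : rpow2 1 = 1 := by simp [rpow2]
        have hM1 : M 1 ≤ C := by simpa using hMd 1
        rw [hr0] at h1 ⊢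
        rw [hr1] at h2
        show Frec M k 0 + Frec M k 1 + 2 ^ k * M 1 ≤ _
        have e1 : 2^k * M 1 ≤ 2^k * C := mul_le_mul_of_nonneg_left hM1 h2k
        push_cast at h1 h2 ⊢
        rw [pow_succ]
        nlinarith
      | l + 1 =>
        have hle : (l:ℕ) + 1 ≤ 2 ^ Nat.clog 2 (l+1) := Nat.le_pow_clog (by norm_num) _
        show (if l + 1 = 2 ^ Nat.log 2 (l + 1) then
            Frec M k (l + 2) + 2 ^ k * M (l + 1)
          else 2 * Frec M k (l + 2) + 2 ^ k * M (rpow2 (l + 1))) ≤ _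
        split
        · rename_i h
          have hre : rpow2 (l+1) = l+1 := by
            rw [rpow2]
            conv_lhs => rw [show Nat.clog 2 (l+1) = Nat.log 2 (l+1) by
              conv_lhs => rw [h]
              exact Nat.clog_pow 2 _ (by norm_num)]
            exact h.symm
          have hclog : Nat.clog 2 (l+2) ≤ Nat.clog 2 (l+1) + 1 := by
            rw [Nat.clog_le_iff_le_pow (by norm_num)]
            calc l + 2 ≤ 2 ^ Nat.clog 2 (l+1) + 2 ^ Nat.clog 2 (l+1) := by
                  have : 1 ≤ 2 ^ Nat.clog 2 (l+1) := Nat.one_le_two_pow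
                  omega
              _ = 2 ^ (Nat.clog 2 (l+1) + 1) := by ring
          have hrle : rpow2 (l+2) ≤ 2 * rpow2 (l+1) := by
            rw [rpow2, rpow2, ← pow_succ']
            exact Nat.pow_le_pow_right (by norm_num) hclog
          have h1 := ih (l+2)
          have hMl : M (l+1) ≤ C * (l+1) := by
            have := hMd (l+1); push_cast at this ⊢; linarith
          have hrler : (rpow2 (l+2) : ℝ) ≤ 2 * rpow2 (l+1) := by exact_mod_cast hrle
          have hrnn : (0:ℝ) ≤ (rpow2 (l+1) : ℝ) := by positivity
          have hre' : ((l:ℝ)+1) = (rpow2 (l+1) : ℝ) := by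
            rw [hre]; push_cast; ring
          rw [hre'] at hMl
          have e1 : 2^k * M (l+1) ≤ 2^k * (C * rpow2 (l+1)) :=
            mul_le_mul_of_nonneg_left hMl h2k
          have e2 : (1/2 : ℝ) * k * 2^k * C * (rpow2 (l+2) : ℝ) ≤
              (1/2 : ℝ) * k * 2^k * C * (2 * rpow2 (l+1)) :=
            mul_le_mul_of_nonneg_left hrler (by positivity)
          push_cast at h1 e1 e2 ⊢
          rw [pow_succ]
          nlinarith
        · rename_i h
          have hlt : (l:ℕ) + 1 < 2 ^ Nat.clog 2 (l+1) := by
            rcases lt_or_eq_of_le hle with h' | h'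
            · exact h'
            · exfalso; apply h
              rw [h', Nat.log_pow (by norm_num)]
          have hclog : Nat.clog 2 (l+2) = Nat.clog 2 (l+1) := by
            refine le_antisymm ?_ (Nat.clog_mono_right 2 (by omega))
            rw [Nat.clog_le_iff_le_pow (by norm_num)]
            omega
          have hreq : rpow2 (l+2) = rpow2 (l+1) := by rw [rpow2, rpow2, hclog]
          have h1 := ih (l+2)
          rw [hreq] at h1
          have hMr : M (rpow2 (l+1)) ≤ C * rpow2 (l+1) := by
            have := hMd (rpow2 (l+1)); linarith
          have hrnn : (0:ℝ) ≤ (rpow2 (l+1) : ℝ) := by positivity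
          have e1 : 2^k * M (rpow2 (l+1)) ≤ 2^k * (C * rpow2 (l+1)) :=
            mul_le_mul_of_nonneg_left hMr h2k
          push_cast at h1 e1 ⊢
          rw [pow_succ]
          nlinarith
  constructor
  · intro hl
    have := key m 0
    have hr0 : rpow2 0 = 1 := by simp [rpow2]
    rw [hr0] at this
    simpa using this
  · intro _; exact key m l
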